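/- Let ρ > 0 and 1 ≤ q < ∞. The function f(t) = e^{−ρt} does not belong to the Lorentz space L^{2,q} of the measure space ((1,∞), e^{2ρt} dt); that is, ∫₀^∞ (f*(t)·t^{1/2})^q dt/t = ∞, where f* is the decreasing rearrangement of f with respect to the measure e^{2ρt} dt. -/

import Mathlib

open MeasureTheory Set

/-- The decreasing rearrangement of `f` with respect to the measure `μ`:
`f*(t) = inf { s ≥ 0 : μ({x : |f(x)| > s}) ≤ t }`. -/
noncomputable def rearrangement {M : Type*} [MeasurableSpace M] (μ : Measure M)
    (f : M → ℝ) (t : ℝ) : ℝ :=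
  sInf {s : ℝ | 0 ≤ s ∧ μ {x | s < |f x|} ≤ ENNReal.ofReal t}

lemma lintegral_inv_Ioi_top {T : ℝ} (hT : 0 < T) :
    ∫⁻ t in Set.Ioi T, ENNReal.ofReal t⁻¹ = ⊤ := by
  by_contra hne
  apply not_IntegrableOn_Ioi_inv (a := T)
  refine ⟨measurable_inv.aestronglyMeasurable, ?_⟩
  rw [hasFiniteIntegral_iff_norm]
  have heq : ∫⁻ t in Set.Ioi T, ENNReal.ofReal ‖t⁻¹‖ =
      ∫⁻ t in Set.Ioi T, ENNReal.ofReal t⁻¹ := by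
    apply lintegral_congr_ae
    filter_upwards [ae_restrict_mem measurableSet_Ioi] with t ht
    rw [Real.norm_eq_abs, abs_of_pos (inv_pos.mpr (hT.trans ht))]
  rw [heq]
  exact lt_top_iff_ne_top.mpr hne

lemma rearr_lower (ρ : ℝ) (hρ : 0 < ρ) {t : ℝ} (ht : Real.exp (2 * ρ) ≤ t) :
    Real.exp (-ρ) / Real.sqrt (2 * t) ≤
      rearrangement
        ((volume.restrict (Set.Ioi (1 : ℝ))).withDensity
          (fun s => ENNReal.ofReal (Real.exp (2 * ρ * s))))
        (fun s => Real.exp (-ρ * s)) t := by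
  have ht0 : 0 < t := lt_of_lt_of_le (Real.exp_pos _) ht
  set μ := ((volume.restrict (Set.Ioi (1 : ℝ))).withDensity
      (fun s => ENNReal.ofReal (Real.exp (2 * ρ * s)))) with hμdef
  set s₀ : ℝ := Real.exp (-ρ) / Real.sqrt (2 * t) with hs₀def
  have hs₀pos : 0 < s₀ := div_pos (Real.exp_pos _) (Real.sqrt_pos.mpr (by linarith))
  -- s₀ < exp (-2ρ)
  have hs₀lt : s₀ < Real.exp (-(2 * ρ)) := by
    have h1 : Real.sqrt (2 * t) > Real.exp ρ := by
      have : Real.exp ρ = Real.sqrt (Real.exp ρ ^ 2) := by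
        rw [Real.sqrt_sq (Real.exp_pos _).le]
      rw [this]
      apply Real.sqrt_lt_sqrt (sq_nonneg _)
      have : Real.exp ρ ^ 2 = Real.exp (2 * ρ) := by
        rw [← Real.exp_nat_mul]; norm_num [mul_comm]
      rw [this]; linarith
    have h2 : s₀ < Real.exp (-ρ) / Real.exp ρ := by
      apply div_lt_div_of_pos_left (Real.exp_pos _) (Real.exp_pos _) h1
    calc s₀ < Real.exp (-ρ) / Real.exp ρ := h2
      _ = Real.exp (-(2 * ρ)) := by rw [← Real.exp_sub]; ring_nf
  apply le_csInf
  · refine ⟨1, zero_le_one, ?_⟩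
    have hset : {x : ℝ | (1 : ℝ) < |Real.exp (-ρ * x)|} ∩ Set.Ioi 1 = ∅ := by
      ext x
      simp only [Set.mem_inter_iff, Set.mem_setOf_eq, Set.mem_Ioi, Set.mem_empty_iff_false,
        iff_false, not_and]
      intro hx
      rw [abs_of_pos (Real.exp_pos _)] at hx
      have := Real.exp_lt_exp.mp (show Real.exp 0 < Real.exp (-ρ * x) by simpa using hx)
      intro hx1; nlinarith
    have hms : MeasurableSet {x : ℝ | (1 : ℝ) < |Real.exp (-ρ * x)|} :=
      measurableSet_lt measurable_const
        ((Real.continuous_exp.comp (continuous_const.mul continuous_id)).abs.measurable)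
    rw [hμdef, withDensity_apply _ hms, Measure.restrict_restrict hms, hset,
      Measure.restrict_empty, lintegral_zero_measure]
    exact zero_le
  · rintro s ⟨hs0, hsμ⟩
    by_contra hlt
    push_neg at hlt
    have key : ENNReal.ofReal t < μ {x | s < |Real.exp (-ρ * x)|} := by
      rcases eq_or_lt_of_le hs0 with rfl | hspos
      · -- s = 0 : measure is infinite
        have hset : {x : ℝ | (0 : ℝ) < |Real.exp (-ρ * x)|} = Set.univ := by
          ext x; simp [abs_of_pos (Real.exp_pos _), Real.exp_pos]
        rw [hset, hμdef, withDensity_apply _ MeasurableSet.univ, Measure.restrict_univ]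
        refine lt_of_lt_of_le (lt_top_iff_ne_top.mpr ENNReal.ofReal_ne_top) ?_
        calc (⊤ : ENNReal) = 1 * volume (Set.Ioi (1 : ℝ)) := by simp [Real.volume_Ioi]
          _ = ∫⁻ _ in Set.Ioi (1 : ℝ), 1 := by rw [setLIntegral_const]
          _ ≤ ∫⁻ x in Set.Ioi (1 : ℝ), ENNReal.ofReal (Real.exp (2 * ρ * x)) := by
              apply setLIntegral_mono' measurableSet_Ioi
              intro x hx
              rw [show (1 : ENNReal) = ENNReal.ofReal 1 by simp]
              apply ENNReal.ofReal_le_ofReal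
              rw [show (1 : ℝ) = Real.exp 0 by simp]
              apply Real.exp_le_exp.mpr
              nlinarith [Set.mem_Ioi.mp hx]
      · -- 0 < s < s₀
        set a : ℝ := -Real.log s / ρ with hadef
        have hloga : Real.log s < -(2 * ρ) := by
          calc Real.log s < Real.log (Real.exp (-(2 * ρ))) :=
                Real.log_lt_log hspos (lt_trans hlt hs₀lt)
            _ = -(2 * ρ) := Real.log_exp _
        have ha2 : 2 < a := by
          rw [hadef, lt_div_iff₀ hρ]; linarith
        have hsub : Set.Ioo (a - 1) a ⊆ {x : ℝ | s < |Real.exp (-ρ * x)|} ∩ Set.Ioi 1 := by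
          rintro x ⟨hx1, hx2⟩
          constructor
          · show s < |Real.exp (-ρ * x)|
            rw [abs_of_pos (Real.exp_pos _)]
            have : Real.log s < -ρ * x := by
              have : x * ρ < -Real.log s := by
                rw [hadef] at hx2
                calc x * ρ < (-Real.log s / ρ) * ρ := by
                      exact mul_lt_mul_of_pos_right hx2 hρ
                  _ = -Real.log s := by field_simp
              linarith
            calc s = Real.exp (Real.log s) := (Real.exp_log hspos).symm
              _ < Real.exp (-ρ * x) := Real.exp_lt_exp.mpr this
          · exact Set.mem_Ioi.mpr (by linarith)
        have hms : MeasurableSet {x : ℝ | s < |Real.exp (-ρ * x)|} :=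
          measurableSet_lt measurable_const
            ((Real.continuous_exp.comp (continuous_const.mul continuous_id)).abs.measurable)
        have hmeas : μ {x | s < |Real.exp (-ρ * x)|} ≥
            ENNReal.ofReal (Real.exp (2 * ρ * (a - 1))) := by
          rw [hμdef, withDensity_apply _ hms, Measure.restrict_restrict hms]
          calc ENNReal.ofReal (Real.exp (2 * ρ * (a - 1)))
              = ENNReal.ofReal (Real.exp (2 * ρ * (a - 1))) * volume (Set.Ioo (a - 1) a) := by
                rw [Real.volume_Ioo]; norm_num
            _ = ∫⁻ _ in Set.Ioo (a - 1) a, ENNReal.ofReal (Real.exp (2 * ρ * (a - 1))) := by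
                rw [setLIntegral_const]
            _ ≤ ∫⁻ x in Set.Ioo (a - 1) a, ENNReal.ofReal (Real.exp (2 * ρ * x)) := by
                apply setLIntegral_mono' measurableSet_Ioo
                intro x hx
                apply ENNReal.ofReal_le_ofReal
                apply Real.exp_le_exp.mpr
                nlinarith [hx.1]
            _ ≤ ∫⁻ x in {x : ℝ | s < |Real.exp (-ρ * x)|} ∩ Set.Ioi 1,
                  ENNReal.ofReal (Real.exp (2 * ρ * x)) := lintegral_mono_set hsub
        refine lt_of_lt_of_le ?_ hmeas
        apply ENNReal.ofReal_lt_ofReal_iff_of_nonneg ht0.le |>.mpr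
        -- exp (2ρ(a-1)) = exp(-2ρ)/s² > 2t > t
        have hs2 : s ^ 2 = Real.exp (2 * Real.log s) := by
          rw [show (2 : ℝ) * Real.log s = ((2 : ℕ) : ℝ) * Real.log s by norm_num,
            Real.exp_nat_mul, Real.exp_log hspos]
        have hval : Real.exp (2 * ρ * (a - 1)) = Real.exp (-(2 * ρ)) / s ^ 2 := by
          have h1 : 2 * ρ * (a - 1) = -(2 * ρ) - 2 * Real.log s := by
            rw [hadef]; field_simp; ring
          rw [h1, Real.exp_sub, hs2]
        rw [hval]
        have hexpsq : Real.exp (-ρ) ^ 2 = Real.exp (-(2 * ρ)) := by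
          rw [sq, ← Real.exp_add]; ring_nf
        have hs₀sq : s₀ ^ 2 = Real.exp (-(2 * ρ)) / (2 * t) := by
          rw [hs₀def, div_pow, Real.sq_sqrt (by linarith), hexpsq]
        have hssq : s ^ 2 < Real.exp (-(2 * ρ)) / (2 * t) := by
          rw [← hs₀sq]; nlinarith
        have h2 : s ^ 2 * (2 * t) < Real.exp (-(2 * ρ)) :=
          (lt_div_iff₀ (by linarith)).mp hssq
        have : 2 * t < Real.exp (-(2 * ρ)) / s ^ 2 := by
          rw [lt_div_iff₀ (by positivity)]; nlinarith
        linarith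
    exact absurd hsμ (not_le.mpr key)

theorem stmt_14 (ρ q : ℝ) (hρ : 0 < ρ) (hq1 : 1 ≤ q) :
    ∫⁻ t in Set.Ioi (0 : ℝ),
        ENNReal.ofReal
          ((rearrangement
              ((volume.restrict (Set.Ioi (1 : ℝ))).withDensity
                (fun s => ENNReal.ofReal (Real.exp (2 * ρ * s))))
              (fun s => Real.exp (-ρ * s)) t * t ^ ((1 : ℝ) / 2)) ^ q / t)
      = ⊤ := by
  set c : ℝ := Real.exp (-ρ) / Real.sqrt 2 with hcdef
  have hc : 0 < c := div_pos (Real.exp_pos _) (by positivity)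
  set T : ℝ := Real.exp (2 * ρ) with hTdef
  have hT : 0 < T := Real.exp_pos _
  rw [eq_top_iff]
  calc (⊤ : ENNReal) = ∫⁻ t in Set.Ioi T, ENNReal.ofReal (c ^ q) * ENNReal.ofReal t⁻¹ := by
        rw [lintegral_const_mul _ (measurable_inv.ennreal_ofReal),
          lintegral_inv_Ioi_top hT, ENNReal.mul_top]
        simp only [ne_eq, ENNReal.ofReal_eq_zero, not_le]
        positivity
    _ ≤ ∫⁻ t in Set.Ioi T,
        ENNReal.ofReal
          ((rearrangement
              ((volume.restrict (Set.Ioi (1 : ℝ))).withDensity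
                (fun s => ENNReal.ofReal (Real.exp (2 * ρ * s))))
              (fun s => Real.exp (-ρ * s)) t * t ^ ((1 : ℝ) / 2)) ^ q / t) := by
        apply setLIntegral_mono' measurableSet_Ioi
        intro t htmem
        have ht : T < t := htmem
        have ht0 : 0 < t := hT.trans ht
        rw [← ENNReal.ofReal_mul (by positivity)]
        apply ENNReal.ofReal_le_ofReal
        rw [div_eq_mul_inv _ t]
        apply mul_le_mul_of_nonneg_right _ (by positivity)
        apply Real.rpow_le_rpow hc.le _ (by linarith)
        have hre := rearr_lower ρ hρ (t := t) ht.le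
        have hsq : Real.exp (-ρ) / Real.sqrt (2 * t) * t ^ ((1 : ℝ) / 2) = c := by
          rw [← Real.sqrt_eq_rpow, Real.sqrt_mul (by norm_num) t, hcdef]
          field_simp
        calc c = Real.exp (-ρ) / Real.sqrt (2 * t) * t ^ ((1 : ℝ) / 2) := hsq.symm
          _ ≤ _ := by
              apply mul_le_mul_of_nonneg_right hre
              exact Real.rpow_nonneg ht0.le _
    _ ≤ _ := lintegral_mono_set (Set.Ioi_subset_Ioi hT.le)
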